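/- Let G be the symmetric group Sym(4). Then every real element of G whose order is a power of an odd prime has conjugacy class size a power of 2 (so G satisfies: every odd prime power order real element has class size a power of 2 or not divisible by 4), G = O^{2'}(G), O_{2'}(G) is trivial, G does not have a normal Sylow 2-subgroup, and G does not have a normal 2-complement. -/

import Mathlib

open Equiv Subgroup

instance instDecIsConj (x : Equiv.Perm (Fin 4)) : DecidablePred (IsConj x) := fun y =>
  decidable_of_iff (∃ c : Equiv.Perm (Fin 4), c * x * c⁻¹ = y) isConj_iff.symm

set_option maxRecDepth 10000 in
private lemma aux1 : ∀ x : Equiv.Perm (Fin 4), x ^ 3 = 1 →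
    Fintype.card {y : Equiv.Perm (Fin 4) // IsConj x y} = 1 ∨
    Fintype.card {y : Equiv.Perm (Fin 4) // IsConj x y} = 8 := by decide

private def c3 : Equiv.Perm (Fin 4) := Equiv.swap 0 1 * Equiv.swap 1 2
private def d3 : Equiv.Perm (Fin 4) := Equiv.swap 0 1 * Equiv.swap 1 3

set_option maxRecDepth 10000 in
private lemma aux3 : ∀ y : Equiv.Perm (Fin 4), y ^ 3 = 1 → y ≠ 1 →
    ∃ g : Equiv.Perm (Fin 4), g * y * g⁻¹ = c3 := by decide

private lemma card_s4 : Nat.card (Equiv.Perm (Fin 4)) = 24 := by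
  rw [Nat.card_eq_fintype_card]; decide

private lemma orderOf_dvd_24 (x : Equiv.Perm (Fin 4)) : orderOf x ∣ 24 :=
  card_s4 ▸ orderOf_dvd_natCard x

private lemma odd_order_cube (x : Equiv.Perm (Fin 4)) (h : Odd (orderOf x)) :
    x ^ 3 = 1 := by
  rw [← orderOf_dvd_iff_pow_eq_one]
  have h24 := orderOf_dvd_24 x
  have hle := Nat.le_of_dvd (by norm_num) h24
  interval_cases h' : (orderOf x) <;> revert h24 h <;> decide

private lemma orderOf_c3 : orderOf c3 = 3 :=
  orderOf_eq_prime (by decide) (by decide)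


private lemma part2 (N : Subgroup (Equiv.Perm (Fin 4))) (hN : N.Normal)
    (hodd : Odd N.index) : N = ⊤ := by
  haveI := hN
  have key : ∀ g : Equiv.Perm (Fin 4), g * g = 1 → g ∈ N := by
    intro g hg
    have h1 : (QuotientGroup.mk g : Equiv.Perm (Fin 4) ⧸ N) = 1 := by
      rw [← orderOf_eq_one_iff]
      have hd2 : orderOf (QuotientGroup.mk g : Equiv.Perm (Fin 4) ⧸ N) ∣ 2 := by
        apply orderOf_dvd_of_pow_eq_one
        rw [← QuotientGroup.mk_pow, pow_two, hg, QuotientGroup.mk_one]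
      have hdi : orderOf (QuotientGroup.mk g : Equiv.Perm (Fin 4) ⧸ N) ∣ N.index := by
        rw [Subgroup.index_eq_card]
        exact orderOf_dvd_natCard _
      rcases (Nat.dvd_prime Nat.prime_two).1 hd2 with h | h
      · exact h
      · exfalso
        rw [h] at hdi
        rw [Nat.odd_iff] at hodd
        omega
    exact (QuotientGroup.eq_one_iff g).1 h1
  rw [eq_top_iff, ← Equiv.Perm.closure_isSwap, Subgroup.closure_le]
  rintro σ ⟨a, b, hab, rfl⟩
  exact key _ (Equiv.swap_mul_self a b)

private lemma part3 (N : Subgroup (Equiv.Perm (Fin 4))) (hN : N.Normal)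
    (hodd : Odd (Nat.card N)) : N = ⊥ := by
  by_contra hne
  have hdvd : Nat.card ↥N ∣ 24 := card_s4 ▸ Subgroup.card_subgroup_dvd_card N
  have h1 : Nat.card ↥N ≠ 1 := fun h => hne (Subgroup.card_eq_one.mp h)
  have hcard : Nat.card ↥N = 3 := by
    rw [Nat.odd_iff] at hodd
    have hle := Nat.le_of_dvd (by norm_num) hdvd
    interval_cases h : (Nat.card ↥N) <;> omega
  haveI : Fact (Nat.Prime 3) := ⟨by norm_num⟩
  haveI : Fintype ↥N := Fintype.ofFinite _
  obtain ⟨x, hx⟩ := exists_prime_orderOf_dvd_card (G := ↥N) 3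
    (by rw [← Nat.card_eq_fintype_card, hcard])
  have hx3 : orderOf (x : Equiv.Perm (Fin 4)) = 3 := (Subgroup.orderOf_coe x).trans hx
  have hxc : (x : Equiv.Perm (Fin 4)) ^ 3 = 1 := by
    rw [← hx3]; exact pow_orderOf_eq_one _
  have hxne : (x : Equiv.Perm (Fin 4)) ≠ 1 := by
    intro h; rw [h, orderOf_one] at hx3; omega
  obtain ⟨g, hg⟩ := aux3 x hxc hxne
  have hc : c3 ∈ N := hg ▸ hN.conj_mem _ x.2 g
  have hzle : Subgroup.zpowers c3 ≤ N := Subgroup.zpowers_le.mpr hc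
  have hNz : N = Subgroup.zpowers c3 := by
    refine (Subgroup.eq_of_le_of_card_ge hzle ?_).symm
    rw [hcard, Nat.card_zpowers, orderOf_c3]
  obtain ⟨h, hh⟩ := aux3 d3 (by decide) (by decide)
  have hd : d3 ∈ N := by
    have hd3 : d3 = h⁻¹ * c3 * h⁻¹⁻¹ := by rw [← hh]; group
    rw [hd3]; exact hN.conj_mem _ hc h⁻¹
  rw [hNz, Subgroup.mem_zpowers_iff] at hd
  obtain ⟨k, hk⟩ := hd
  rw [← zpow_mod_orderOf, orderOf_c3] at hk
  have hk' : c3 ^ (k % (3:ℤ)) = d3 := by exact_mod_cast hk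
  have hk3 : k % 3 = 0 ∨ k % 3 = 1 ∨ k % 3 = 2 := by omega
  rcases hk3 with h'|h'|h' <;> rw [h'] at hk'
  · rw [zpow_zero] at hk'; revert hk'; decide
  · rw [zpow_one] at hk'; revert hk'; decide
  · rw [show (2:ℤ) = ((2:ℕ):ℤ) from rfl, zpow_natCast] at hk'; revert hk'; decide

private lemma part4 :
    ¬ ∃ P : Sylow 2 (Equiv.Perm (Fin 4)), (P : Subgroup (Equiv.Perm (Fin 4))).Normal := by
  rintro ⟨P, hP⟩
  haveI : Fact (Nat.Prime 2) := ⟨Nat.prime_two⟩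
  have key : ∀ x : Equiv.Perm (Fin 4), x ^ 4 = 1 →
      x ∈ (P : Subgroup (Equiv.Perm (Fin 4))) := by
    intro x hx
    have hpg : IsPGroup 2 (Subgroup.zpowers x) := by
      intro g
      refine ⟨2, ?_⟩
      have hdvd : orderOf (g : Equiv.Perm (Fin 4)) ∣ 4 :=
        (orderOf_dvd_of_mem_zpowers g.2).trans (orderOf_dvd_of_pow_eq_one hx)
      have h4 : (g : Equiv.Perm (Fin 4)) ^ 4 = 1 := orderOf_dvd_iff_pow_eq_one.mp hdvd
      refine Subtype.ext ?_
      rw [show (2:ℕ)^2 = 4 from rfl]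
      push_cast
      exact h4
    obtain ⟨Q, hQ⟩ := hpg.exists_le_sylow
    have hQP : Q = P := by
      letI := Sylow.unique_of_normal P hP
      exact Subsingleton.elim Q P
    exact hQP ▸ hQ (Subgroup.mem_zpowers x)
  have ha : Equiv.swap (0:Fin 4) 1 ∈ (P : Subgroup (Equiv.Perm (Fin 4))) := key _ (by decide)
  have hb : Equiv.swap (1:Fin 4) 2 ∈ (P : Subgroup (Equiv.Perm (Fin 4))) := key _ (by decide)
  have hc : c3 ∈ (P : Subgroup (Equiv.Perm (Fin 4))) := mul_mem ha hb
  obtain ⟨k, hk⟩ := P.isPGroup' ⟨c3, hc⟩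
  have hk' : c3 ^ (2 ^ k) = 1 := by
    have := congrArg (Subtype.val) hk
    push_cast at this
    simpa using this
  have h3 : (3:ℕ) ∣ 2 ^ k := by
    rw [← orderOf_c3]
    exact orderOf_dvd_of_pow_eq_one hk'
  have := Nat.Prime.dvd_of_dvd_pow (by norm_num : Nat.Prime 3) h3
  norm_num at this

private lemma part5 :
    ¬ ∃ K : Subgroup (Equiv.Perm (Fin 4)), K.Normal ∧ Odd (Nat.card K) ∧
      ∃ m : ℕ, K.index = 2 ^ m := by
  rintro ⟨K, hK, hodd, m, hm⟩
  rw [part3 K hK hodd, Subgroup.index_bot, card_s4] at hm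
  have h3 : (3:ℕ) ∣ 2 ^ m := by rw [← hm]; norm_num
  have := Nat.Prime.dvd_of_dvd_pow (by norm_num : Nat.Prime 3) h3
  norm_num at this

private lemma part1 (x : Equiv.Perm (Fin 4)) (_ : IsConj x x⁻¹)
    (h : ∃ p k : ℕ, p.Prime ∧ Odd p ∧ orderOf x = p ^ k) :
    ∃ m : ℕ, Nat.card {y : Equiv.Perm (Fin 4) | IsConj x y} = 2 ^ m := by
  obtain ⟨p, k, hp, hoddp, hord⟩ := h
  have hodd : Odd (orderOf x) := hord ▸ hoddp.pow
  have h3 := odd_order_cube x hodd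
  rcases aux1 x h3 with h | h
  · exact ⟨0, by rw [Nat.card_eq_fintype_card]; convert h using 2 <;> rfl⟩
  · exact ⟨3, by rw [Nat.card_eq_fintype_card]; convert h using 2 <;> rfl⟩



/-- In `G = Sym(4)`: every real element of odd prime power order has
conjugacy class size a power of 2; `G = O^{2'}(G)`; `O_{2'}(G)` is trivial;
`G` has no normal Sylow 2-subgroup; and `G` has no normal 2-complement. -/
theorem stmt_17 :
    (∀ x : Equiv.Perm (Fin 4), IsConj x x⁻¹ →
      (∃ p k : ℕ, p.Prime ∧ Odd p ∧ orderOf x = p ^ k) →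
      ∃ m : ℕ, Nat.card {y : Equiv.Perm (Fin 4) | IsConj x y} = 2 ^ m) ∧
    (∀ N : Subgroup (Equiv.Perm (Fin 4)), N.Normal → Odd N.index → N = ⊤) ∧
    (∀ N : Subgroup (Equiv.Perm (Fin 4)), N.Normal → Odd (Nat.card N) → N = ⊥) ∧
    (¬ ∃ P : Sylow 2 (Equiv.Perm (Fin 4)), (P : Subgroup (Equiv.Perm (Fin 4))).Normal) ∧
    (¬ ∃ K : Subgroup (Equiv.Perm (Fin 4)), K.Normal ∧ Odd (Nat.card K) ∧
      ∃ m : ℕ, K.index = 2 ^ m) := by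
  exact ⟨part1, part2, part3, part4, part5⟩
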